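/- Let φ be a bounded Riemann integrable function on I = [a,b] with indefinite integral Φ, and let ψ be a bounded Riemann integrable function on Φ(I) with indefinite integral Ψ. If f is bounded on Φ(I) and (f∘Φ)(ψ∘Φ) is Riemann–Stieltjes integrable with respect to Φ on I, then ∫_I (f∘Φ)(ψ∘Φ) dΦ = ∫_I (f∘Φ)(ψ∘Φ)·φ dx, i.e., the Stieltjes integral with respect to Φ can be computed as a Riemann integral against the density φ. -/

import Mathlib

open Set Filter

/-- `p 0, p 1, …, p n` is a partition of `[a,b]`. -/
def IsPartition (a b : ℝ) (n : ℕ) (p : ℕ → ℝ) : Prop :=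
  p 0 = a ∧ p n = b ∧ ∀ i < n, p i ≤ p (i + 1)

/-- Upper Darboux–Stieltjes sum of `f` with respect to the integrator `G` along a partition. -/
noncomputable def upperSum (f G : ℝ → ℝ) (n : ℕ) (p : ℕ → ℝ) : ℝ :=
  ∑ i ∈ Finset.range n, sSup (f '' Set.Icc (p i) (p (i + 1))) * (G (p (i + 1)) - G (p i))

/-- Lower Darboux–Stieltjes sum. -/
noncomputable def lowerSum (f G : ℝ → ℝ) (n : ℕ) (p : ℕ → ℝ) : ℝ :=
  ∑ i ∈ Finset.range n, sInf (f '' Set.Icc (p i) (p (i + 1))) * (G (p (i + 1)) - G (p i))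

def upperSums (f G : ℝ → ℝ) (a b : ℝ) : Set ℝ :=
  {s | ∃ n p, IsPartition a b n p ∧ s = upperSum f G n p}

def lowerSums (f G : ℝ → ℝ) (a b : ℝ) : Set ℝ :=
  {s | ∃ n p, IsPartition a b n p ∧ s = lowerSum f G n p}

/-- Darboux–Stieltjes integrability of `f` with respect to `G` on `[a,b]`. -/
def DSIntegrable (f G : ℝ → ℝ) (a b : ℝ) : Prop :=
  sInf (upperSums f G a b) = sSup (lowerSums f G a b)

/-- The Darboux–Stieltjes integral (the infimum of upper sums). -/
noncomputable def DSIntegral (f G : ℝ → ℝ) (a b : ℝ) : ℝ :=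
  sInf (upperSums f G a b)

/-- Oriented Darboux–Stieltjes integrability on the interval from `a` to `b`. -/
def oDSIntegrable (f G : ℝ → ℝ) (a b : ℝ) : Prop :=
  DSIntegrable f G (min a b) (max a b)

/-- Oriented Darboux–Stieltjes integral on the interval from `a` to `b`. -/
noncomputable def oDSIntegral (f G : ℝ → ℝ) (a b : ℝ) : ℝ :=
  if a ≤ b then DSIntegral f G a b else -DSIntegral f G b a

/-- `f` is bounded on `s`. -/
def BddOn (f : ℝ → ℝ) (s : Set ℝ) : Prop := ∃ M, ∀ x ∈ s, |f x| ≤ M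

/-- The oscillation of `f` on a set. -/
noncomputable def osc (f : ℝ → ℝ) (s : Set ℝ) : ℝ := sSup (f '' s) - sInf (f '' s)

/-- `v` is the Riemann–Stieltjes integral of `f` with respect to `G` on `[a,b]`,
as a limit of Riemann–Stieltjes sums as the mesh of tagged partitions tends to `0`. -/
def RSIntegralTo (f G : ℝ → ℝ) (a b v : ℝ) : Prop :=
  ∀ ε > 0, ∃ δ > 0, ∀ (n : ℕ) (p t : ℕ → ℝ), IsPartition a b n p →
    (∀ i < n, p (i + 1) - p i < δ) → (∀ i < n, t i ∈ Set.Icc (p i) (p (i + 1))) →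
    |(∑ i ∈ Finset.range n, f (t i) * (G (p (i + 1)) - G (p i))) - v| < ε

/-- Riemann–Stieltjes integrability. -/
def RSIntegrable (f G : ℝ → ℝ) (a b : ℝ) : Prop := ∃ v, RSIntegralTo f G a b v

namespace Stmt5Aux

lemma part_mono {a b : ℝ} {n : ℕ} {p : ℕ → ℝ} (hp : IsPartition a b n p)
    {i j : ℕ} (hij : i ≤ j) (hj : j ≤ n) : p i ≤ p j := by
  induction j with
  | zero => have : i = 0 := Nat.le_zero.mp hij; subst this; exact le_rfl
  | succ j ih =>
    rcases Nat.eq_or_lt_of_le hij with rfl | hlt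
    · exact le_rfl
    · exact le_trans (ih (Nat.lt_succ_iff.mp hlt) (by omega)) (hp.2.2 j (by omega))

lemma part_mem {a b : ℝ} {n : ℕ} {p : ℕ → ℝ} (hp : IsPartition a b n p)
    {i : ℕ} (hi : i ≤ n) : p i ∈ Set.Icc a b :=
  ⟨hp.1 ▸ part_mono hp (Nat.zero_le i) hi, hp.2.1 ▸ part_mono hp hi le_rfl⟩

lemma part_le {a b : ℝ} {n : ℕ} {p : ℕ → ℝ} (hp : IsPartition a b n p) : a ≤ b := by
  have := part_mono hp (Nat.zero_le n) le_rfl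
  rwa [hp.1, hp.2.1] at this

lemma trivial_partition {a b : ℝ} (hab : a ≤ b) :
    IsPartition a b 1 (fun i => if i = 0 then a else b) := by
  refine ⟨rfl, rfl, fun i hi => ?_⟩
  interval_cases i
  simpa using hab

lemma upperSum_id (f : ℝ → ℝ) (n : ℕ) (p : ℕ → ℝ) :
    upperSum f id n p
      = ∑ i ∈ Finset.range n, sSup (f '' Set.Icc (p i) (p (i + 1))) * (p (i + 1) - p i) := rfl

-- image facts
lemma img_ne {f : ℝ → ℝ} {u v : ℝ} (huv : u ≤ v) : (f '' Set.Icc u v).Nonempty :=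
  ⟨f u, ⟨u, ⟨le_rfl, huv⟩, rfl⟩⟩

lemma img_bddAbove {f : ℝ → ℝ} {M u v a b : ℝ} (hb : ∀ x ∈ Set.Icc a b, |f x| ≤ M)
    (hsub : Set.Icc u v ⊆ Set.Icc a b) : BddAbove (f '' Set.Icc u v) := by
  refine ⟨M, ?_⟩
  rintro _ ⟨x, hx, rfl⟩
  exact (abs_le.mp (hb x (hsub hx))).2

lemma img_bddBelow {f : ℝ → ℝ} {M u v a b : ℝ} (hb : ∀ x ∈ Set.Icc a b, |f x| ≤ M)
    (hsub : Set.Icc u v ⊆ Set.Icc a b) : BddBelow (f '' Set.Icc u v) := by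
  refine ⟨-M, ?_⟩
  rintro _ ⟨x, hx, rfl⟩
  exact (abs_le.mp (hb x (hsub hx))).1

lemma sSup_img_le {f : ℝ → ℝ} {M u v a b : ℝ} (huv : u ≤ v)
    (hb : ∀ x ∈ Set.Icc a b, |f x| ≤ M) (hsub : Set.Icc u v ⊆ Set.Icc a b) :
    sSup (f '' Set.Icc u v) ≤ M := by
  refine csSup_le (img_ne huv) ?_
  rintro _ ⟨x, hx, rfl⟩
  exact (abs_le.mp (hb x (hsub hx))).2

lemma neg_le_sSup_img {f : ℝ → ℝ} {M u v a b : ℝ} (huv : u ≤ v)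
    (hb : ∀ x ∈ Set.Icc a b, |f x| ≤ M) (hsub : Set.Icc u v ⊆ Set.Icc a b) :
    -M ≤ sSup (f '' Set.Icc u v) := by
  have h1 : f u ≤ sSup (f '' Set.Icc u v) :=
    le_csSup (img_bddAbove hb hsub) ⟨u, ⟨le_rfl, huv⟩, rfl⟩
  have h2 := (abs_le.mp (hb u (hsub ⟨le_rfl, huv⟩))).1
  linarith

lemma le_sSup_img {f : ℝ → ℝ} {M u v a b t : ℝ}
    (hb : ∀ x ∈ Set.Icc a b, |f x| ≤ M) (hsub : Set.Icc u v ⊆ Set.Icc a b)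
    (ht : t ∈ Set.Icc u v) : f t ≤ sSup (f '' Set.Icc u v) :=
  le_csSup (img_bddAbove hb hsub) ⟨t, ht, rfl⟩

lemma sInf_img_le {f : ℝ → ℝ} {M u v a b t : ℝ}
    (hb : ∀ x ∈ Set.Icc a b, |f x| ≤ M) (hsub : Set.Icc u v ⊆ Set.Icc a b)
    (ht : t ∈ Set.Icc u v) : sInf (f '' Set.Icc u v) ≤ f t :=
  csInf_le (img_bddBelow hb hsub) ⟨t, ht, rfl⟩

lemma sInf_img_ge {f : ℝ → ℝ} {M u v a b : ℝ} (huv : u ≤ v)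
    (hb : ∀ x ∈ Set.Icc a b, |f x| ≤ M) (hsub : Set.Icc u v ⊆ Set.Icc a b) :
    -M ≤ sInf (f '' Set.Icc u v) := by
  refine le_csInf (img_ne huv) ?_
  rintro _ ⟨x, hx, rfl⟩
  exact (abs_le.mp (hb x (hsub hx))).1


lemma upperSum_le_single {a b M : ℝ} {φ : ℝ → ℝ} {n : ℕ} {p : ℕ → ℝ}
    (hb : ∀ x ∈ Set.Icc a b, |φ x| ≤ M) (hp : IsPartition a b n p) :
    upperSum φ id n p ≤ sSup (φ '' Set.Icc a b) * (b - a) := by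
  rw [upperSum_id]
  have key : sSup (φ '' Set.Icc a b) * (b - a)
      = ∑ i ∈ Finset.range n, sSup (φ '' Set.Icc a b) * (p (i + 1) - p i) := by
    rw [← Finset.mul_sum, Finset.sum_range_sub, hp.2.1, hp.1]
  rw [key]
  refine Finset.sum_le_sum fun i hi => ?_
  have hi' := Finset.mem_range.mp hi
  have h1 : p i ≤ p (i + 1) := hp.2.2 i hi'
  have hsub : Set.Icc (p i) (p (i + 1)) ⊆ Set.Icc a b :=
    Set.Icc_subset_Icc (part_mem hp hi'.le).1 (part_mem hp hi').2
  have : sSup (φ '' Set.Icc (p i) (p (i + 1))) ≤ sSup (φ '' Set.Icc a b) :=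
    csSup_le_csSup (img_bddAbove hb Set.Subset.rfl) (img_ne h1) (Set.image_mono hsub)
  exact mul_le_mul_of_nonneg_right this (by linarith)

lemma upperSum_ge_single {a b M : ℝ} {φ : ℝ → ℝ} {n : ℕ} {p : ℕ → ℝ}
    (hb : ∀ x ∈ Set.Icc a b, |φ x| ≤ M) (hp : IsPartition a b n p) :
    sInf (φ '' Set.Icc a b) * (b - a) ≤ upperSum φ id n p := by
  rw [upperSum_id]
  have key : sInf (φ '' Set.Icc a b) * (b - a)
      = ∑ i ∈ Finset.range n, sInf (φ '' Set.Icc a b) * (p (i + 1) - p i) := by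
    rw [← Finset.mul_sum, Finset.sum_range_sub, hp.2.1, hp.1]
  rw [key]
  refine Finset.sum_le_sum fun i hi => ?_
  have hi' := Finset.mem_range.mp hi
  have h1 : p i ≤ p (i + 1) := hp.2.2 i hi'
  have hsub : Set.Icc (p i) (p (i + 1)) ⊆ Set.Icc a b :=
    Set.Icc_subset_Icc (part_mem hp hi'.le).1 (part_mem hp hi').2
  have h2 : sInf (φ '' Set.Icc a b) ≤ sSup (φ '' Set.Icc (p i) (p (i + 1))) := by
    calc sInf (φ '' Set.Icc a b) ≤ φ (p i) :=
          sInf_img_le hb Set.Subset.rfl (hsub ⟨le_rfl, h1⟩)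
      _ ≤ sSup (φ '' Set.Icc (p i) (p (i + 1))) := le_sSup_img hb hsub ⟨le_rfl, h1⟩
  exact mul_le_mul_of_nonneg_right h2 (by linarith)

lemma upperSums_nonempty {a b : ℝ} (hab : a ≤ b) (φ : ℝ → ℝ) :
    (upperSums φ id a b).Nonempty :=
  ⟨_, 1, _, trivial_partition hab, rfl⟩

lemma upperSums_bddBelow {a b M : ℝ} {φ : ℝ → ℝ}
    (hb : ∀ x ∈ Set.Icc a b, |φ x| ≤ M) :
    BddBelow (upperSums φ id a b) := by
  refine ⟨sInf (φ '' Set.Icc a b) * (b - a), ?_⟩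
  rintro _ ⟨n, p, hp, rfl⟩
  exact upperSum_ge_single hb hp

lemma DSIntegral_le_single {a b M : ℝ} {φ : ℝ → ℝ} (hab : a ≤ b)
    (hb : ∀ x ∈ Set.Icc a b, |φ x| ≤ M) :
    DSIntegral φ id a b ≤ sSup (φ '' Set.Icc a b) * (b - a) := by
  refine le_trans (csInf_le (upperSums_bddBelow hb) ⟨1, _, trivial_partition hab, rfl⟩) ?_
  exact upperSum_le_single hb (trivial_partition hab)

lemma DSIntegral_ge_single {a b M : ℝ} {φ : ℝ → ℝ} (hab : a ≤ b)
    (hb : ∀ x ∈ Set.Icc a b, |φ x| ≤ M) :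
    sInf (φ '' Set.Icc a b) * (b - a) ≤ DSIntegral φ id a b := by
  refine le_csInf (upperSums_nonempty hab φ) ?_
  rintro _ ⟨n, p, hp, rfl⟩
  exact upperSum_ge_single hb hp

lemma partition_split {a b : ℝ} {n : ℕ} {p : ℕ → ℝ} (hp : IsPartition a b n p)
    {i₀ : ℕ} (h0 : i₀ ≤ n) :
    IsPartition a (p i₀) i₀ p ∧ IsPartition (p i₀) b (n - i₀) (fun i => p (i₀ + i)) ∧
    ∀ f : ℝ → ℝ, upperSum f id n p =
      upperSum f id i₀ p + upperSum f id (n - i₀) (fun i => p (i₀ + i)) := by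
  refine ⟨⟨hp.1, rfl, fun i hi => hp.2.2 i (lt_of_lt_of_le hi h0)⟩,
    ⟨by simp, ?_, fun i hi => hp.2.2 (i₀ + i) (by omega)⟩, fun f => ?_⟩
  · show p (i₀ + (n - i₀)) = b
    rw [Nat.add_sub_cancel' h0, hp.2.1]
  · rw [upperSum_id, upperSum_id, upperSum_id,
      show n = i₀ + (n - i₀) by omega, Finset.sum_range_add]
    rw [show i₀ + (n - i₀) - i₀ = n - i₀ by omega]
    exact congrArg₂ (· + ·) rfl (Finset.sum_congr rfl fun i _ => by rw [Nat.add_assoc])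

lemma sum3 (F : ℕ → ℝ) (j k : ℕ) :
    ∑ i ∈ Finset.range (j + 1 + k), F i
      = ((∑ i ∈ Finset.range j, F i) + F j) + ∑ i ∈ Finset.range k, F (j + 1 + i) := by
  rw [Finset.sum_range_add, Finset.sum_range_succ]

lemma sum4 (F : ℕ → ℝ) (j k : ℕ) :
    ∑ i ∈ Finset.range (j + 2 + k), F i
      = (((∑ i ∈ Finset.range j, F i) + F j) + F (j + 1)) + ∑ i ∈ Finset.range k, F (j + 2 + i) := by
  rw [Finset.sum_range_add, Finset.sum_range_succ, Finset.sum_range_succ]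

lemma insert_point {a b c : ℝ} {n : ℕ} {p : ℕ → ℝ} (hp : IsPartition a b n p)
    (hc : c ∈ Set.Icc a b) (φ : ℝ → ℝ) (M δ : ℝ) (hM : 0 ≤ M)
    (hb : ∀ x ∈ Set.Icc a b, |φ x| ≤ M) (hδ : 0 < δ) :
    ∃ p' : ℕ → ℝ, IsPartition a b (n + 1) p' ∧ (∃ i₀ ≤ n + 1, p' i₀ = c) ∧
      (∀ i ≤ n, ∃ i' ≤ n + 1, p' i' = p i) ∧
      ((∀ i < n, p (i + 1) - p i < δ) →
        ((∀ i < n + 1, p' (i + 1) - p' i < δ) ∧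
          upperSum φ id n p ≤ upperSum φ id (n + 1) p' + 2 * M * δ)) := by
  classical
  have hex : ∃ i, i ≤ n ∧ c ≤ p i := ⟨n, le_rfl, hp.2.1 ▸ hc.2⟩
  set i₀ := Nat.find hex with hi₀def
  obtain ⟨hi₀n, hci₀⟩ : i₀ ≤ n ∧ c ≤ p i₀ := Nat.find_spec hex
  have hlt : ∀ i < i₀, p i < c := by
    intro i hi
    by_contra hcon
    exact Nat.find_min hex hi ⟨by omega, not_lt.mp hcon⟩
  set p' : ℕ → ℝ := fun i => if i < i₀ then p i else if i = i₀ then c else p (i - 1)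
    with hp'def
  have hA : ∀ i < i₀, p' i = p i := fun i hi => if_pos hi
  have hB : p' i₀ = c := by simp [hp'def]
  have hC : ∀ i, i₀ < i → p' i = p (i - 1) := by
    intro i hi
    simp only [hp'def]
    rw [if_neg (by omega), if_neg (by omega)]
  have hca : i₀ = 0 → c = a := by
    intro h0
    have h1 : c ≤ p 0 := h0 ▸ hci₀
    rw [hp.1] at h1
    exact le_antisymm h1 hc.1
  have hP : IsPartition a b (n + 1) p' := by
    refine ⟨?_, ?_, ?_⟩
    · by_cases h0 : 0 < i₀
      · rw [hA 0 h0, hp.1]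
      · have h0' : i₀ = 0 := by omega
        rw [show (0:ℕ) = i₀ from h0'.symm, hB, hca h0']
    · rw [hC (n+1) (by omega)]
      simpa using hp.2.1
    · intro i hi
      by_cases h1 : i + 1 < i₀
      · rw [hA i (by omega), hA (i+1) h1]; exact hp.2.2 i (by omega)
      · by_cases h2 : i + 1 = i₀
        · rw [hA i (by omega), h2, hB]
          exact (hlt i (by omega)).le
        · by_cases h3 : i = i₀
          · subst h3
            rw [hB, hC (i₀+1) (by omega), show i₀ + 1 - 1 = i₀ from rfl]
            exact hci₀
          · rw [hC i (by omega), hC (i+1) (by omega), show i + 1 - 1 = i from rfl]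
            have h4 := hp.2.2 (i-1) (by omega)
            rwa [show i - 1 + 1 = i by omega] at h4
  refine ⟨p', hP, ⟨i₀, by omega, hB⟩, ?_, ?_⟩
  · intro i hi
    by_cases h1 : i < i₀
    · exact ⟨i, by omega, hA i h1⟩
    · refine ⟨i + 1, by omega, ?_⟩
      rw [hC (i+1) (by omega), show i + 1 - 1 = i from rfl]
  · intro hmesh
    constructor
    · intro i hi
      by_cases h1 : i + 1 < i₀
      · rw [hA i (by omega), hA (i+1) h1]; exact hmesh i (by omega)
      · by_cases h2 : i + 1 = i₀
        · rw [hA i (by omega), h2, hB]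
          have h4 := hmesh i (by omega)
          have h5 : c ≤ p (i + 1) := h2 ▸ hci₀
          linarith
        · by_cases h3 : i = i₀
          · subst h3
            rw [hB, hC (i₀+1) (by omega), show i₀ + 1 - 1 = i₀ from rfl]
            rcases Nat.eq_zero_or_pos i₀ with h0 | h0
            · rw [h0, hp.1, ← hca h0]
              simpa using hδ
            · have h6 := hlt (i₀ - 1) (by omega)
              have h7 := hmesh (i₀ - 1) (by omega)
              rw [show i₀ - 1 + 1 = i₀ by omega] at h7
              linarith
          · rw [hC i (by omega), hC (i+1) (by omega), show i + 1 - 1 = i from rfl]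
            have h4 := hmesh (i-1) (by omega)
            rwa [show i - 1 + 1 = i by omega] at h4
    · -- the sum estimate
      rcases Nat.eq_zero_or_pos i₀ with h0 | h0
      · -- c = a; the new partition just repeats `a` at the start
        have hU' : upperSum φ id (n+1) p' = upperSum φ id n p := by
          rw [upperSum_id, upperSum_id, Finset.sum_range_succ']
          have e0 : sSup (φ '' Set.Icc (p' 0) (p' (0+1))) * (p' (0+1) - p' 0) = 0 := by
            have e1 : p' 0 = c := by rw [show (0:ℕ) = i₀ from h0.symm, hB]
            have e2 : p' (0+1) = p 0 := by rw [hC 1 (by omega)]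
            rw [e1, e2, hp.1, ← hca h0]
            ring
          rw [e0, add_zero]
          refine Finset.sum_congr rfl fun i _ => ?_
          have e1 : p' (i+1) = p i := by
            rw [hC (i+1) (by omega), show i + 1 - 1 = i from rfl]
          have e2 : p' (i+1+1) = p (i+1) := by
            rw [hC (i+1+1) (by omega), show i + 1 + 1 - 1 = i + 1 from rfl]
          rw [e1, e2]
        rw [hU']
        nlinarith
      · obtain ⟨j, hj⟩ : ∃ j, i₀ = j + 1 := ⟨i₀ - 1, by omega⟩
        obtain ⟨k, rfl⟩ : ∃ k, n = j + 1 + k := ⟨n - j - 1, by omega⟩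
        rw [upperSum_id, upperSum_id, sum3, show j + 1 + k + 1 = j + 2 + k by omega, sum4]
        have e1 : ∀ i ∈ Finset.range j,
            sSup (φ '' Set.Icc (p' i) (p' (i+1))) * (p' (i+1) - p' i)
              = sSup (φ '' Set.Icc (p i) (p (i+1))) * (p (i+1) - p i) := by
          intro i hi
          have hi' := Finset.mem_range.mp hi
          rw [hA i (by omega), hA (i+1) (by omega)]
        have e2 : ∀ i ∈ Finset.range k,
            sSup (φ '' Set.Icc (p' (j+2+i)) (p' (j+2+i+1))) * (p' (j+2+i+1) - p' (j+2+i))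
              = sSup (φ '' Set.Icc (p (j+1+i)) (p (j+1+i+1))) * (p (j+1+i+1) - p (j+1+i)) := by
          intro i _
          have f1 : p' (j+2+i) = p (j+1+i) := by
            rw [hC (j+2+i) (by omega), show j + 2 + i - 1 = j + 1 + i by omega]
          have f2 : p' (j+2+i+1) = p (j+1+i+1) := by
            rw [hC (j+2+i+1) (by omega), show j + 2 + i + 1 - 1 = j + 1 + i + 1 by omega]
          rw [f1, f2]
        rw [Finset.sum_congr rfl e1, Finset.sum_congr rfl e2]
        -- remaining comparison of the middle terms
        have hpj : a ≤ p j := (part_mem hp (by omega)).1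
        have hpj1 : p (j+1) ≤ b := (part_mem hp (by omega : j + 1 ≤ j + 1 + k)).2
        have hjc : p j ≤ c := (hlt j (by omega)).le
        have hcj1 : c ≤ p (j+1) := hj ▸ hci₀
        have e3 : sSup (φ '' Set.Icc (p j) (p (j+1))) * (p (j+1) - p j) ≤ M * δ := by
          have s1 : sSup (φ '' Set.Icc (p j) (p (j+1))) ≤ M :=
            sSup_img_le (by linarith) hb (Set.Icc_subset_Icc hpj hpj1)
          have s2 : p (j+1) - p j < δ := hmesh j (by omega)
          exact mul_le_mul s1 s2.le (by linarith) hM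
        have e4 : -(M * (c - p j)) ≤ sSup (φ '' Set.Icc (p' j) (p' (j+1))) * (p' (j+1) - p' j) := by
          rw [hA j (by omega), show j + 1 = i₀ from hj.symm, hB]
          have s1 : -M ≤ sSup (φ '' Set.Icc (p j) c) :=
            neg_le_sSup_img hjc hb (Set.Icc_subset_Icc hpj (le_trans hcj1 hpj1))
          calc -(M * (c - p j)) = -M * (c - p j) := by ring
            _ ≤ _ := mul_le_mul_of_nonneg_right s1 (by linarith)
        have e5 : -(M * (p (j+1) - c))
            ≤ sSup (φ '' Set.Icc (p' (j+1)) (p' (j+1+1))) * (p' (j+1+1) - p' (j+1)) := by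
          rw [show j + 1 = i₀ from hj.symm, hB, hC (i₀+1) (by omega),
            show i₀ + 1 - 1 = i₀ from rfl, hj]
          have s1 : -M ≤ sSup (φ '' Set.Icc c (p (j+1))) :=
            neg_le_sSup_img hcj1 hb (Set.Icc_subset_Icc (le_trans hpj hjc) hpj1)
          calc -(M * (p (j+1) - c)) = -M * (p (j+1) - c) := by ring
            _ ≤ _ := mul_le_mul_of_nonneg_right s1 (by linarith)
        have e6 : M * (c - p j) + M * (p (j+1) - c) ≤ M * δ := by
          have s2 : p (j+1) - p j < δ := hmesh j (by omega)
          nlinarith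
        linarith

lemma refine_upper (φ : ℝ → ℝ) (M : ℝ) :
    ∀ (m : ℕ) (a b : ℝ) (n : ℕ) (p q : ℕ → ℝ), (∀ x ∈ Set.Icc a b, |φ x| ≤ M) →
      IsPartition a b n p → IsPartition a b m q → (∀ j ≤ m, ∃ i ≤ n, p i = q j) →
      upperSum φ id n p ≤ upperSum φ id m q := by
  intro m
  induction m with
  | zero =>
    intro a b n p q hb hp hq _
    have hab : a = b := by rw [← hq.1, ← hq.2.1]
    have h0 : upperSum φ id n p = 0 := by
      rw [upperSum_id]
      refine Finset.sum_eq_zero fun i hi => ?_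
      have hi' := Finset.mem_range.mp hi
      obtain ⟨g1a, g1b⟩ := part_mem hp hi'.le
      obtain ⟨g2a, g2b⟩ := part_mem hp hi'
      have e1 : p (i+1) = p i := le_antisymm (by rw [← hab] at g2b; linarith)
        (by rw [← hab] at g1b; linarith [hp.2.2 i hi'])
      rw [e1, sub_self, mul_zero]
    have h1 : upperSum φ id 0 q = 0 := by simp [upperSum]
    rw [h0, h1]
  | succ m ih =>
    intro a b n p q hb hp hq hcont
    have hqm : q m ∈ Set.Icc a b := part_mem hq (by omega)
    obtain ⟨i₀, hi₀n, hpi₀⟩ := hcont m (by omega)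
    obtain ⟨hp1, hp2, hsum⟩ := partition_split hp hi₀n
    rw [hsum φ]
    have hq1 : IsPartition a (q m) m q := ⟨hq.1, rfl, fun j hj => hq.2.2 j (by omega)⟩
    have hUq : upperSum φ id (m+1) q = upperSum φ id m q
        + sSup (φ '' Set.Icc (q m) b) * (b - q m) := by
      rw [upperSum_id, Finset.sum_range_succ, ← upperSum_id, hq.2.1]
    rw [hUq]
    rw [hpi₀] at hp1 hp2
    have hbx : ∀ z ∈ Set.Icc a (q m), |φ z| ≤ M := fun z hz => hb z ⟨hz.1, le_trans hz.2 hqm.2⟩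
    have hby : ∀ z ∈ Set.Icc (q m) b, |φ z| ≤ M := fun z hz => hb z ⟨le_trans hqm.1 hz.1, hz.2⟩
    have hcont' : ∀ j ≤ m, ∃ i ≤ i₀, p i = q j := by
      intro j hj
      obtain ⟨i, hin, hpi⟩ := hcont j (by omega)
      by_cases h1 : i ≤ i₀
      · exact ⟨i, h1, hpi⟩
      · refine ⟨i₀, le_rfl, ?_⟩
        have g1 : p i₀ ≤ p i := part_mono hp (by omega) hin
        have g2 : q j ≤ q m := part_mono hq hj (by omega)
        rw [hpi] at g1
        rw [← hpi₀] at g2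
        exact le_antisymm g1 g2
    exact add_le_add (ih a (q m) i₀ p q hbx hp1 hq1 hcont') (upperSum_le_single hby hp2)

lemma insert_many {a b : ℝ} {n : ℕ} {p : ℕ → ℝ} (hp : IsPartition a b n p)
    (φ : ℝ → ℝ) (q : ℕ → ℝ) (M δ : ℝ) (hM : 0 ≤ M)
    (hb : ∀ x ∈ Set.Icc a b, |φ x| ≤ M) (hδ : 0 < δ)
    (hmesh : ∀ i < n, p (i + 1) - p i < δ) (m : ℕ) (hq : ∀ j ≤ m, q j ∈ Set.Icc a b) :
    ∀ k, k ≤ m + 1 → ∃ p' : ℕ → ℝ, IsPartition a b (n + k) p' ∧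
      (∀ j < k, ∃ i ≤ n + k, p' i = q j) ∧
      (∀ i < n + k, p' (i + 1) - p' i < δ) ∧
      upperSum φ id n p ≤ upperSum φ id (n + k) p' + 2 * M * (k : ℝ) * δ := by
  intro k
  induction k with
  | zero =>
    intro _
    exact ⟨p, hp, fun j hj => absurd hj (Nat.not_lt_zero j), hmesh, by simp⟩
  | succ k ih =>
    intro hk
    obtain ⟨p', hP, hq', hmesh', hsum'⟩ := ih (by omega)
    obtain ⟨p'', hP'', ⟨i₀, hi₀, hc⟩, hold, hrest⟩ :=
      insert_point hP (hq k (by omega)) φ M δ hM hb hδ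
    obtain ⟨hmesh'', hsum''⟩ := hrest hmesh'
    refine ⟨p'', by rwa [show n + (k+1) = n + k + 1 by omega], ?_, ?_, ?_⟩
    · intro j hj
      rcases Nat.lt_or_ge j k with hjk | hjk
      · obtain ⟨i, hin, hpi⟩ := hq' j hjk
        obtain ⟨i', hi'n, hpi'⟩ := hold i hin
        exact ⟨i', by omega, by rw [hpi', hpi]⟩
      · have hjk' : j = k := by omega
        exact ⟨i₀, by omega, hjk' ▸ hc⟩
    · intro i hi
      exact hmesh'' i (by omega)
    · calc upperSum φ id n p ≤ upperSum φ id (n+k) p' + 2*M*(k:ℝ)*δ := hsum'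
        _ ≤ (upperSum φ id (n+k+1) p'' + 2*M*δ) + 2*M*(k:ℝ)*δ := by linarith
        _ = upperSum φ id (n+(k+1)) p'' + 2*M*((k:ℝ)+1)*δ := by
            rw [show n+(k+1) = n+k+1 by omega]; ring
        _ = upperSum φ id (n+(k+1)) p'' + 2*M*(((k+1 : ℕ)):ℝ)*δ := by push_cast; ring

lemma upper_darboux_half {a b M : ℝ} {φ : ℝ → ℝ} (hab : a ≤ b) (hM : 0 ≤ M)
    (hb : ∀ x ∈ Set.Icc a b, |φ x| ≤ M) :
    ∀ ε > 0, ∃ δ > 0, ∀ n p, IsPartition a b n p → (∀ i < n, p (i + 1) - p i < δ) →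
      upperSum φ id n p < sInf (upperSums φ id a b) + ε := by
  intro ε hε
  obtain ⟨u, ⟨m, q, hq, rfl⟩, hu⟩ :=
    exists_lt_of_csInf_lt (upperSums_nonempty hab φ)
      (lt_add_of_pos_right _ (by linarith : (0:ℝ) < ε/2))
  have hCpos : (0:ℝ) < 2 * (2*M*((m:ℝ)+1) + 1) := by positivity
  refine ⟨ε / (2 * (2*M*((m:ℝ)+1) + 1)), by positivity, fun n p hp hmesh => ?_⟩
  set δ := ε / (2 * (2*M*((m:ℝ)+1) + 1)) with hδdef
  have hδ : 0 < δ := by positivity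
  obtain ⟨p', hP, hq', hmesh', hsum'⟩ :=
    insert_many hp φ q M δ hM hb hδ hmesh m (fun j hj => part_mem hq hj) (m+1) le_rfl
  have hre : upperSum φ id (n + (m+1)) p' ≤ upperSum φ id m q :=
    refine_upper φ M m a b (n+(m+1)) p' q hb hP hq
      (fun j hj => hq' j (by omega))
  have hδbound : 2*M*(((m+1:ℕ)):ℝ)*δ ≤ ε/2 := by
    have hC : (0:ℝ) ≤ 2*M*((m:ℝ)+1) := by positivity
    rw [hδdef]
    push_cast
    rw [← mul_div_assoc, div_le_div_iff₀ hCpos (by norm_num : (0:ℝ) < 2)]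
    nlinarith
  calc upperSum φ id n p ≤ upperSum φ id (n+(m+1)) p' + 2*M*(((m+1:ℕ)):ℝ)*δ := hsum'
    _ ≤ upperSum φ id m q + ε/2 := by linarith
    _ < (sInf (upperSums φ id a b) + ε/2) + ε/2 := by linarith
    _ = sInf (upperSums φ id a b) + ε := by ring

lemma neg_image (f : ℝ → ℝ) (s : Set ℝ) : (fun x => -f x) '' s = -(f '' s) := by
  ext x
  simp only [Set.mem_image, Set.mem_neg]
  constructor
  · rintro ⟨y, hy, rfl⟩
    exact ⟨y, hy, (neg_neg _).symm⟩
  · rintro ⟨y, hy, hxy⟩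
    exact ⟨y, hy, by linarith⟩

lemma lowerSum_id (f : ℝ → ℝ) (n : ℕ) (p : ℕ → ℝ) :
    lowerSum f id n p
      = ∑ i ∈ Finset.range n, sInf (f '' Set.Icc (p i) (p (i + 1))) * (p (i + 1) - p i) := rfl

lemma lowerSum_neg (f : ℝ → ℝ) (n : ℕ) (p : ℕ → ℝ) :
    lowerSum f id n p = -upperSum (fun x => -f x) id n p := by
  rw [lowerSum_id, upperSum_id, ← Finset.sum_neg_distrib]
  refine Finset.sum_congr rfl fun i _ => ?_
  rw [← neg_mul]
  congr 1
  rw [Real.sInf_def, neg_image]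

lemma sSup_lowerSums (f : ℝ → ℝ) (a b : ℝ) :
    sSup (lowerSums f id a b) = -sInf (upperSums (fun x => -f x) id a b) := by
  have hset : lowerSums f id a b = -(upperSums (fun x => -f x) id a b) := by
    ext s
    simp only [lowerSums, upperSums, Set.mem_neg, Set.mem_setOf_eq]
    constructor
    · rintro ⟨n, p, hp, rfl⟩
      exact ⟨n, p, hp, by rw [lowerSum_neg, neg_neg]⟩
    · rintro ⟨n, p, hp, hs⟩
      exact ⟨n, p, hp, by rw [lowerSum_neg, ← hs, neg_neg]⟩
  rw [hset, Real.sInf_def, neg_neg]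

lemma darboux {a b M : ℝ} {φ : ℝ → ℝ} (hab : a ≤ b) (hM : 0 ≤ M)
    (hb : ∀ x ∈ Set.Icc a b, |φ x| ≤ M) (hi : DSIntegrable φ id a b) :
    ∀ ε > 0, ∃ δ > 0, ∀ n p, IsPartition a b n p → (∀ i < n, p (i + 1) - p i < δ) →
      upperSum φ id n p - lowerSum φ id n p < ε := by
  intro ε hε
  obtain ⟨δ₁, hδ₁, h₁⟩ := upper_darboux_half hab hM hb (ε/2) (by linarith)
  have hbneg : ∀ x ∈ Set.Icc a b, |(fun x => -φ x) x| ≤ M := fun x hx => by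
    simpa [abs_neg] using hb x hx
  obtain ⟨δ₂, hδ₂, h₂⟩ := upper_darboux_half hab hM hbneg (ε/2) (by linarith)
  refine ⟨min δ₁ δ₂, lt_min hδ₁ hδ₂, fun n p hp hmesh => ?_⟩
  have m1 := h₁ n p hp (fun i hi' => lt_of_lt_of_le (hmesh i hi') (min_le_left _ _))
  have m2 := h₂ n p hp (fun i hi' => lt_of_lt_of_le (hmesh i hi') (min_le_right _ _))
  have key : sInf (upperSums (fun x => -φ x) id a b) = -sInf (upperSums φ id a b) := by
    have h3 := sSup_lowerSums φ a b
    rw [DSIntegrable] at hi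
    rw [← hi] at h3
    linarith
  have key2 : lowerSum φ id n p = -upperSum (fun x => -φ x) id n p := lowerSum_neg φ n p
  rw [key] at m2
  linarith

lemma integral_increment {a b x y M : ℝ} {φ : ℝ → ℝ} (hM : 0 ≤ M)
    (hb : ∀ z ∈ Set.Icc a b, |φ z| ≤ M) (hax : a ≤ x) (hxy : x ≤ y) (hyb : y ≤ b) :
    sInf (φ '' Set.Icc x y) * (y - x) ≤ DSIntegral φ id a y - DSIntegral φ id a x ∧
      DSIntegral φ id a y - DSIntegral φ id a x ≤ sSup (φ '' Set.Icc x y) * (y - x) := by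
  have hbx : ∀ z ∈ Set.Icc a x, |φ z| ≤ M :=
    fun z hz => hb z ⟨hz.1, le_trans hz.2 (le_trans hxy hyb)⟩
  have hby : ∀ z ∈ Set.Icc a y, |φ z| ≤ M := fun z hz => hb z ⟨hz.1, le_trans hz.2 hyb⟩
  have hbxy : ∀ z ∈ Set.Icc x y, |φ z| ≤ M :=
    fun z hz => hb z ⟨le_trans hax hz.1, le_trans hz.2 hyb⟩
  constructor
  · have key : DSIntegral φ id a x + sInf (φ '' Set.Icc x y) * (y - x)
        ≤ DSIntegral φ id a y := by
      refine le_csInf (upperSums_nonempty (le_trans hax hxy) φ) ?_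
      rintro _ ⟨n, p, hp, rfl⟩
      obtain ⟨p', hP, ⟨i₀, hi₀, hx0⟩, hold, _⟩ :=
        insert_point hp ⟨hax, hxy⟩ φ M 1 hM hby one_pos
      have hre : upperSum φ id (n+1) p' ≤ upperSum φ id n p :=
        refine_upper φ M n a y (n+1) p' p hby hP hp (fun j hj => hold j hj)
      obtain ⟨hp1, hp2, hsum⟩ := partition_split hP hi₀
      rw [hsum φ] at hre
      rw [hx0] at hp1 hp2
      have hfirst : DSIntegral φ id a x ≤ upperSum φ id i₀ p' :=
        csInf_le (upperSums_bddBelow hbx) ⟨i₀, p', hp1, rfl⟩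
      have hsecond : sInf (φ '' Set.Icc x y) * (y - x)
          ≤ upperSum φ id (n+1-i₀) (fun i => p' (i₀ + i)) :=
        upperSum_ge_single hbxy hp2
      linarith
    linarith
  · have key : DSIntegral φ id a y
        ≤ DSIntegral φ id a x + sSup (φ '' Set.Icc x y) * (y - x) := by
      have h2 : ∀ u ∈ upperSums φ id a x,
          DSIntegral φ id a y ≤ u + sSup (φ '' Set.Icc x y) * (y - x) := by
        rintro _ ⟨n, p, hp, rfl⟩
        set p' : ℕ → ℝ := fun i => if i ≤ n then p i else y with hp'def
        have hA : ∀ i ≤ n, p' i = p i := fun i hi => if_pos hi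
        have hB : p' (n+1) = y := if_neg (by omega)
        have hP : IsPartition a y (n+1) p' := by
          refine ⟨by rw [hA 0 (Nat.zero_le n), hp.1], hB, ?_⟩
          intro i hi
          by_cases h1 : i + 1 ≤ n
          · rw [hA i (by omega), hA (i+1) h1]
            exact hp.2.2 i (by omega)
          · have h3 : i = n := by omega
            rw [h3, hA n le_rfl, hB, hp.2.1]
            exact hxy
        have hsumext : upperSum φ id (n+1) p'
            = upperSum φ id n p + sSup (φ '' Set.Icc x y) * (y - x) := by
          rw [upperSum_id, Finset.sum_range_succ, upperSum_id]
          congr 1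
          · refine Finset.sum_congr rfl fun i hi => ?_
            have hi' := Finset.mem_range.mp hi
            rw [hA i (by omega), hA (i+1) (by omega)]
          · rw [hA n le_rfl, hB, hp.2.1]
        have hmem : upperSum φ id (n+1) p' ∈ upperSums φ id a y := ⟨n+1, p', hP, rfl⟩
        have h4 := csInf_le (upperSums_bddBelow hby) hmem
        rw [hsumext] at h4
        exact h4
      have h3 : DSIntegral φ id a y - sSup (φ '' Set.Icc x y) * (y - x)
          ≤ DSIntegral φ id a x :=
        le_csInf (upperSums_nonempty hax φ) (fun u hu => by linarith [h2 u hu])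
      linarith
    linarith

end Stmt5Aux

open Stmt5Aux in
/-- the Stieltjes integral with respect to an indefinite integral `Φ`
of `φ` can be computed as a Riemann integral against the density `φ`. -/
theorem stmt5 (a b : ℝ) (hab : a ≤ b) (φ Φ ψ Ψ f : ℝ → ℝ)
    (hφb : BddOn φ (Set.Icc a b)) (hφi : DSIntegrable φ id a b)
    (hΦ : ∀ x ∈ Set.Icc a b, Φ x = Φ a + DSIntegral φ id a x)
    (hψb : BddOn ψ (Set.Icc (sInf (Φ '' Set.Icc a b)) (sSup (Φ '' Set.Icc a b))))
    (hψi : DSIntegrable ψ id (sInf (Φ '' Set.Icc a b)) (sSup (Φ '' Set.Icc a b)))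
    (hΨ : ∀ y ∈ Set.Icc (sInf (Φ '' Set.Icc a b)) (sSup (Φ '' Set.Icc a b)),
      Ψ y = Ψ (sInf (Φ '' Set.Icc a b)) + DSIntegral ψ id (sInf (Φ '' Set.Icc a b)) y)
    (hf : BddOn f (Set.Icc (sInf (Φ '' Set.Icc a b)) (sSup (Φ '' Set.Icc a b))))
    (v : ℝ)
    (h : RSIntegralTo (fun x => f (Φ x) * ψ (Φ x)) Φ a b v) :
    RSIntegralTo (fun x => f (Φ x) * ψ (Φ x) * φ x) id a b v := by
  obtain ⟨M₀, hbM₀⟩ := hφb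
  set M := max M₀ 0 with hMdef
  have hM : 0 ≤ M := le_max_right _ _
  have hb : ∀ x ∈ Set.Icc a b, |φ x| ≤ M := fun x hx => le_trans (hbM₀ x hx) (le_max_left _ _)
  obtain ⟨Mf, hMf⟩ := hf
  obtain ⟨Mψ, hMψ⟩ := hψb
  have hIb : ∀ z ∈ Set.Icc a b,
      -(M*(b-a)) ≤ DSIntegral φ id a z ∧ DSIntegral φ id a z ≤ M*(b-a) := by
    intro z hz
    have hbz : ∀ w ∈ Set.Icc a z, |φ w| ≤ M := fun w hw => hb w ⟨hw.1, le_trans hw.2 hz.2⟩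
    constructor
    · have h1 := DSIntegral_ge_single hz.1 hbz
      have h2 : -M ≤ sInf (φ '' Set.Icc a z) := sInf_img_ge hz.1 hbz Set.Subset.rfl
      nlinarith [mul_nonneg (by linarith : (0:ℝ) ≤ sInf (φ '' Set.Icc a z) + M)
        (by linarith [hz.1] : (0:ℝ) ≤ z - a), mul_nonneg hM (by linarith [hz.2] : (0:ℝ) ≤ b - z)]
    · have h1 := DSIntegral_le_single hz.1 hbz
      have h2 : sSup (φ '' Set.Icc a z) ≤ M := sSup_img_le hz.1 hbz Set.Subset.rfl
      nlinarith [mul_nonneg (by linarith : (0:ℝ) ≤ M - sSup (φ '' Set.Icc a z))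
        (by linarith [hz.1] : (0:ℝ) ≤ z - a), mul_nonneg hM (by linarith [hz.2] : (0:ℝ) ≤ b - z)]
  have hΦbddA : BddAbove (Φ '' Set.Icc a b) := by
    refine ⟨Φ a + M*(b-a), ?_⟩
    rintro _ ⟨z, hz, rfl⟩
    rw [hΦ z hz]
    linarith [(hIb z hz).2]
  have hΦbddB : BddBelow (Φ '' Set.Icc a b) := by
    refine ⟨Φ a - M*(b-a), ?_⟩
    rintro _ ⟨z, hz, rfl⟩
    rw [hΦ z hz]
    linarith [(hIb z hz).1]
  have hΦmem : ∀ x ∈ Set.Icc a b,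
      Φ x ∈ Set.Icc (sInf (Φ '' Set.Icc a b)) (sSup (Φ '' Set.Icc a b)) :=
    fun x hx => ⟨csInf_le hΦbddB ⟨x, hx, rfl⟩, le_csSup hΦbddA ⟨x, hx, rfl⟩⟩
  set K := Mf * Mψ with hKdef
  have hMf0 : 0 ≤ Mf := le_trans (abs_nonneg _) (hMf (Φ a) (hΦmem a ⟨le_rfl, hab⟩))
  have hMψ0 : 0 ≤ Mψ := le_trans (abs_nonneg _) (hMψ (Φ a) (hΦmem a ⟨le_rfl, hab⟩))
  have hK : 0 ≤ K := mul_nonneg hMf0 hMψ0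
  have hg : ∀ x ∈ Set.Icc a b, |f (Φ x) * ψ (Φ x)| ≤ K := by
    intro x hx
    rw [abs_mul]
    exact mul_le_mul (hMf _ (hΦmem x hx)) (hMψ _ (hΦmem x hx)) (abs_nonneg _) hMf0
  intro ε hε
  obtain ⟨δ₁, hδ₁, h₁⟩ := h (ε/2) (by linarith)
  obtain ⟨δ₂, hδ₂, h₂⟩ := darboux hab hM hb hφi (ε/(2*(K+1))) (by positivity)
  refine ⟨min δ₁ δ₂, lt_min hδ₁ hδ₂, fun n p t hp hmesh ht => ?_⟩
  have hYv : |(∑ i ∈ Finset.range n, f (Φ (t i)) * ψ (Φ (t i)) * (Φ (p (i+1)) - Φ (p i))) - v|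
      < ε/2 := h₁ n p t hp (fun i hi => lt_of_lt_of_le (hmesh i hi) (min_le_left _ _)) ht
  have hUL := h₂ n p hp (fun i hi => lt_of_lt_of_le (hmesh i hi) (min_le_right _ _))
  have key : |(∑ i ∈ Finset.range n, f (Φ (t i)) * ψ (Φ (t i)) * φ (t i) * (p (i+1) - p i))
      - (∑ i ∈ Finset.range n, f (Φ (t i)) * ψ (Φ (t i)) * (Φ (p (i+1)) - Φ (p i)))|
      ≤ K * (upperSum φ id n p - lowerSum φ id n p) := by
    rw [← Finset.sum_sub_distrib]
    calc |∑ i ∈ Finset.range n, (f (Φ (t i)) * ψ (Φ (t i)) * φ (t i) * (p (i+1) - p i)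
          - f (Φ (t i)) * ψ (Φ (t i)) * (Φ (p (i+1)) - Φ (p i)))|
        ≤ ∑ i ∈ Finset.range n, |f (Φ (t i)) * ψ (Φ (t i)) * φ (t i) * (p (i+1) - p i)
          - f (Φ (t i)) * ψ (Φ (t i)) * (Φ (p (i+1)) - Φ (p i))| :=
          Finset.abs_sum_le_sum_abs _ _
      _ ≤ ∑ i ∈ Finset.range n, K * ((sSup (φ '' Set.Icc (p i) (p (i+1)))
            - sInf (φ '' Set.Icc (p i) (p (i+1)))) * (p (i+1) - p i)) := by
          refine Finset.sum_le_sum fun i hi => ?_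
          have hi' := Finset.mem_range.mp hi
          have hpi : p i ≤ p (i+1) := hp.2.2 i hi'
          have hmem_i : p i ∈ Set.Icc a b := part_mem hp hi'.le
          have hmem_i1 : p (i+1) ∈ Set.Icc a b := part_mem hp hi'
          have hsub : Set.Icc (p i) (p (i+1)) ⊆ Set.Icc a b :=
            Set.Icc_subset_Icc hmem_i.1 hmem_i1.2
          obtain ⟨hI1, hI2⟩ := integral_increment hM hb hmem_i.1 hpi hmem_i1.2
          have hti : t i ∈ Set.Icc (p i) (p (i+1)) := ht i hi'
          have hs1 : sInf (φ '' Set.Icc (p i) (p (i+1))) ≤ φ (t i) := sInf_img_le hb hsub hti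
          have hs2 : φ (t i) ≤ sSup (φ '' Set.Icc (p i) (p (i+1))) := le_sSup_img hb hsub hti
          have hΔ : 0 ≤ p (i+1) - p i := by linarith
          have hΦeq : Φ (p (i+1)) - Φ (p i)
              = DSIntegral φ id a (p (i+1)) - DSIntegral φ id a (p i) := by
            rw [hΦ (p (i+1)) hmem_i1, hΦ (p i) hmem_i]; ring
          have habs : |φ (t i) * (p (i+1) - p i) - (Φ (p (i+1)) - Φ (p i))|
              ≤ (sSup (φ '' Set.Icc (p i) (p (i+1)))
                - sInf (φ '' Set.Icc (p i) (p (i+1)))) * (p (i+1) - p i) := by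
            rw [hΦeq]
            have m1 := mul_le_mul_of_nonneg_right hs1 hΔ
            have m2 := mul_le_mul_of_nonneg_right hs2 hΔ
            rw [sub_mul]
            exact abs_le.mpr ⟨by linarith, by linarith⟩
          calc |f (Φ (t i)) * ψ (Φ (t i)) * φ (t i) * (p (i+1) - p i)
                - f (Φ (t i)) * ψ (Φ (t i)) * (Φ (p (i+1)) - Φ (p i))|
              = |f (Φ (t i)) * ψ (Φ (t i))|
                * |φ (t i) * (p (i+1) - p i) - (Φ (p (i+1)) - Φ (p i))| := by
                rw [← abs_mul]; congr 1; ring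
            _ ≤ K * ((sSup (φ '' Set.Icc (p i) (p (i+1)))
                - sInf (φ '' Set.Icc (p i) (p (i+1)))) * (p (i+1) - p i)) :=
                mul_le_mul (hg (t i) (hsub hti)) habs (abs_nonneg _) hK
      _ = K * (upperSum φ id n p - lowerSum φ id n p) := by
          rw [upperSum_id, lowerSum_id, ← Finset.sum_sub_distrib, Finset.mul_sum]
          exact Finset.sum_congr rfl fun i _ => by ring
  have hKb : K * (upperSum φ id n p - lowerSum φ id n p) < ε/2 := by
    have h5 : K * (upperSum φ id n p - lowerSum φ id n p) ≤ K * (ε/(2*(K+1))) :=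
      mul_le_mul_of_nonneg_left hUL.le hK
    have h6 : K * (ε/(2*(K+1))) < ε/2 := by
      rw [← mul_div_assoc, div_lt_div_iff₀ (by positivity) (by norm_num : (0:ℝ) < 2)]
      nlinarith
    linarith
  have hgoal : |(∑ i ∈ Finset.range n, f (Φ (t i)) * ψ (Φ (t i)) * φ (t i) * (p (i+1) - p i))
      - v| < ε := by
    have e : (∑ i ∈ Finset.range n, f (Φ (t i)) * ψ (Φ (t i)) * φ (t i) * (p (i+1) - p i)) - v
        = ((∑ i ∈ Finset.range n, f (Φ (t i)) * ψ (Φ (t i)) * φ (t i) * (p (i+1) - p i))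
          - (∑ i ∈ Finset.range n, f (Φ (t i)) * ψ (Φ (t i)) * (Φ (p (i+1)) - Φ (p i))))
        + ((∑ i ∈ Finset.range n, f (Φ (t i)) * ψ (Φ (t i)) * (Φ (p (i+1)) - Φ (p i))) - v) := by
      ring
    rw [e]
    calc _ ≤ _ := abs_add_le _ _
      _ < ε := by linarith
  exact hgoal
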